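/- arXiv:1607.05807 — 3 statements merged into one kernel-verified Lean document; each statement's English description precedes it below -/
import Mathlib

section
/- Let V and W be real normed vector spaces, D : V → W a continuous linear map which is stable, i.e. there exists a constant C_S > 0 with ‖D v‖ ≥ C_S ‖v‖ for all v ∈ V. Let S ⊆ W be a linear subspace and I : W → W a continuous linear map with I h = h for every h ∈ S. Suppose T, T_r ∈ V satisfy D T_r = I (D T). Then ‖T_r − T‖ ≤ (1/C_S) · (1 + ‖I‖) · infDist(D T, S). (This is the abstract form of Corollary 1: under stability of the differential operator, the convergence of the numerical solution T_r to the analytical solution T is controlled by the consistency error, yielding ‖T_r − T‖ ≤ (K/C_S)‖D‖(1 + ‖I^ρ‖)ω(T, ρ).) -/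
theorem igaC_convergence_by_stability
    {V W : Type*} [NormedAddCommGroup V] [NormedSpace ℝ V]
    [NormedAddCommGroup W] [NormedSpace ℝ W]
    (D : V →L[ℝ] W) (C_S : ℝ) (hCS : 0 < C_S)
    (hstable : ∀ v : V, C_S * ‖v‖ ≤ ‖D v‖)
    (S : Submodule ℝ W) (I : W →L[ℝ] W)
    (hI : ∀ h ∈ S, I h = h)
    (T T_r : V) (hTr : D T_r = I (D T)) :
    ‖T_r - T‖ ≤ (1 / C_S) * (1 + ‖I‖) * Metric.infDist (D T) (S : Set W) := by
  have hIn : (0 : ℝ) ≤ ‖I‖ := norm_nonneg _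
  have h1 : (0 : ℝ) < 1 + ‖I‖ := by linarith
  have key : ∀ h ∈ (S : Set W), C_S * ‖T_r - T‖ ≤ (1 + ‖I‖) * dist (D T) h := by
    intro h hh
    have hIh : I h = h := hI h hh
    have : D (T_r - T) = I (D T) - I h + (h - D T) := by
      rw [map_sub, hTr, hIh]; abel
    calc C_S * ‖T_r - T‖ ≤ ‖D (T_r - T)‖ := hstable _
      _ = ‖I (D T) - I h + (h - D T)‖ := by rw [this]
      _ ≤ ‖I (D T) - I h‖ + ‖h - D T‖ := norm_add_le _ _
      _ = ‖I (D T - h)‖ + ‖h - D T‖ := by rw [map_sub]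
      _ ≤ ‖I‖ * ‖D T - h‖ + ‖h - D T‖ := by
          gcongr; exact I.le_opNorm _
      _ = (1 + ‖I‖) * ‖D T - h‖ := by rw [norm_sub_rev h]; ring
      _ = (1 + ‖I‖) * dist (D T) h := by rw [dist_eq_norm]
  have hS : (S : Set W).Nonempty := ⟨0, S.zero_mem⟩
  have hle : C_S * ‖T_r - T‖ / (1 + ‖I‖) ≤ Metric.infDist (D T) (S : Set W) := by
    refine le_of_not_gt fun hlt => ?_
    obtain ⟨y, hy, hdy⟩ := (Metric.infDist_lt_iff hS).mp hlt
    have h2 : (1 + ‖I‖) * dist (D T) y < C_S * ‖T_r - T‖ := by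
      rw [lt_div_iff₀ h1] at hdy; linarith [hdy]
    exact absurd (key y hy) (not_le.mpr h2)
  rw [div_le_iff₀ h1] at hle
  rw [div_mul_eq_mul_div, div_mul_eq_mul_div, le_div_iff₀ hCS]
  nlinarith [hle]
end

section
/- Let V and W be real normed vector spaces, D : V → W a continuous linear map which is stable with constant C_S > 0 (‖D v‖ ≥ C_S ‖v‖ for all v ∈ V), S ⊆ W a linear subspace, I : W → W a continuous linear map with I h = h for every h ∈ S, and T, T_r ∈ V with D T_r = I (D T). If there exists q ∈ V with D q ∈ S and ‖T − q‖ ≤ ε, then ‖T_r − T‖ ≤ (1/C_S) · (1 + ‖I‖) · ‖D‖ · ε. (Taking ε = K ω(T, ρ) ≤ ρ K max‖∇T‖, this is Corollary 1 of the paper: ‖T_r − T‖_V ≤ (K/C_S)‖D‖(1 + ‖I^ρ‖)ω(T, ρ) ≤ (ρK/C_S)‖D‖(1 + ‖I^ρ‖) max_η ‖∇T(η)‖.) -/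
theorem igaC_convergence_rate
    {V W : Type*} [NormedAddCommGroup V] [NormedSpace ℝ V]
    [NormedAddCommGroup W] [NormedSpace ℝ W]
    (D : V →L[ℝ] W) (C_S : ℝ) (hCS : 0 < C_S)
    (hstable : ∀ v : V, C_S * ‖v‖ ≤ ‖D v‖)
    (S : Submodule ℝ W) (I : W →L[ℝ] W)
    (hI : ∀ h ∈ S, I h = h)
    (T T_r : V) (hTr : D T_r = I (D T))
    (ε : ℝ) (hε : 0 ≤ ε)
    (hq : ∃ q : V, D q ∈ S ∧ ‖T - q‖ ≤ ε) :
    ‖T_r - T‖ ≤ (1 / C_S) * (1 + ‖I‖) * ‖D‖ * ε := by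
  obtain ⟨q, hqS, hqe⟩ := hq
  have key : C_S * ‖T_r - T‖ ≤ (1 + ‖I‖) * ‖D‖ * ε := by
    calc C_S * ‖T_r - T‖ ≤ ‖D (T_r - T)‖ := hstable _
      _ = ‖(I (D T) - I (D q)) + (D q - D T)‖ := by
          rw [map_sub, hTr, hI (D q) hqS]; congr 1; abel
      _ ≤ ‖I (D T) - I (D q)‖ + ‖D q - D T‖ := norm_add_le _ _
      _ = ‖I (D T - D q)‖ + ‖D (q - T)‖ := by rw [map_sub, map_sub]
      _ ≤ ‖I‖ * ‖D T - D q‖ + ‖D‖ * ‖q - T‖ :=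
          add_le_add (I.le_opNorm _) (D.le_opNorm _)
      _ = ‖I‖ * ‖D (T - q)‖ + ‖D‖ * ‖T - q‖ := by
          rw [← map_sub, norm_sub_rev q T]
      _ ≤ ‖I‖ * (‖D‖ * ‖T - q‖) + ‖D‖ * ‖T - q‖ :=
          add_le_add (mul_le_mul_of_nonneg_left (D.le_opNorm _) (norm_nonneg I)) le_rfl
      _ ≤ ‖I‖ * (‖D‖ * ε) + ‖D‖ * ε :=
          add_le_add (mul_le_mul_of_nonneg_left
            (mul_le_mul_of_nonneg_left hqe (norm_nonneg D)) (norm_nonneg I))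
            (mul_le_mul_of_nonneg_left hqe (norm_nonneg D))
      _ = (1 + ‖I‖) * ‖D‖ * ε := by ring
  rw [div_mul_eq_mul_div, div_mul_eq_mul_div, div_mul_eq_mul_div, le_div_iff₀ hCS,
    mul_comm ‖T_r - T‖ C_S]
  linarith
end

section
/- Let V and W be real normed vector spaces and D : V → W a continuous linear map which is stable, i.e. there exists C_S > 0 with ‖D v‖ ≥ C_S ‖v‖ for all v ∈ V. Let (Sₙ)ₙ be a sequence of linear subspaces of W and (Iₙ)ₙ a sequence of continuous linear maps Iₙ : W → W with Iₙ h = h for every h ∈ Sₙ, and suppose there exists C ≥ 0 with ‖Iₙ‖ ≤ C for all n. Let T ∈ V, and for each n let T_{r,n} ∈ V satisfy D T_{r,n} = Iₙ (D T). If infDist(D T, Sₙ) → 0 as n → ∞, then T_{r,n} → T in V. (This is the abstract convergence statement obtained by combining Lemma 3 with the stability of the differential operator, as in Corollary 1: when the operator D of the boundary value problem D T = f is stable and the collocation interpolation operators are uniformly bounded as the knot grid size tends to 0, the numerical solutions converge to the analytical solution.) -/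
theorem igaC_solutions_converge
    {V W : Type*} [NormedAddCommGroup V] [NormedSpace ℝ V]
    [NormedAddCommGroup W] [NormedSpace ℝ W]
    (D : V →L[ℝ] W) (C_S : ℝ) (hCS : 0 < C_S)
    (hstable : ∀ v : V, C_S * ‖v‖ ≤ ‖D v‖)
    (S : ℕ → Submodule ℝ W) (I : ℕ → W →L[ℝ] W)
    (hI : ∀ n, ∀ h ∈ S n, I n h = h)
    (C : ℝ) (hC : 0 ≤ C) (hbound : ∀ n, ‖I n‖ ≤ C)
    (T : V) (T_r : ℕ → V) (hTr : ∀ n, D (T_r n) = I n (D T))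
    (hdense : Filter.Tendsto (fun n => Metric.infDist (D T) ((S n : Set W)))
      Filter.atTop (nhds 0)) :
    Filter.Tendsto T_r Filter.atTop (nhds T) := by
  rw [tendsto_iff_norm_sub_tendsto_zero]
  have hC1 : (0:ℝ) < C + 1 := by linarith
  have key : ∀ n, ‖T_r n - T‖ ≤ ((C+1)/C_S) * Metric.infDist (D T) ((S n : Set W)) := by
    intro n
    have h1 : C_S * ‖T_r n - T‖ ≤ ‖I n (D T) - D T‖ := by
      have := hstable (T_r n - T)
      rwa [map_sub, hTr n] at this
    have hne : ((S n : Set W)).Nonempty := ⟨0, Submodule.zero_mem _⟩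
    have h2 : ‖I n (D T) - D T‖ ≤ (C+1) * Metric.infDist (D T) ((S n : Set W)) := by
      have hle : ‖I n (D T) - D T‖ / (C+1) ≤ Metric.infDist (D T) ((S n : Set W)) := by
        refine le_of_not_gt fun hlt => ?_
        obtain ⟨h, hh, hd⟩ := (Metric.infDist_lt_iff hne).1 hlt
        refine absurd hd (not_lt.2 ?_)
        have heq : I n (D T) - D T = I n (D T - h) - (D T - h) := by
          rw [map_sub, hI n h hh]; abel
        have hb : ‖I n (D T) - D T‖ ≤ (C+1) * ‖D T - h‖ := by
          rw [heq]
          calc ‖I n (D T - h) - (D T - h)‖ ≤ ‖I n (D T - h)‖ + ‖D T - h‖ :=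
                norm_sub_le _ _
            _ ≤ C * ‖D T - h‖ + ‖D T - h‖ := by
                gcongr
                exact le_trans ((I n).le_opNorm _) (by gcongr; exact hbound n)
            _ = (C+1) * ‖D T - h‖ := by ring
        rw [div_le_iff₀ hC1, dist_eq_norm]
        linarith [hb]
      calc ‖I n (D T) - D T‖ = (C+1) * (‖I n (D T) - D T‖ / (C+1)) := by
            field_simp
        _ ≤ (C+1) * Metric.infDist (D T) ((S n : Set W)) := by gcongr
    rw [div_mul_eq_mul_div, le_div_iff₀ hCS]
    calc ‖T_r n - T‖ * C_S = C_S * ‖T_r n - T‖ := by ring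
      _ ≤ ‖I n (D T) - D T‖ := h1
      _ ≤ (C+1) * Metric.infDist (D T) ((S n : Set W)) := h2
  have hlim : Filter.Tendsto (fun n => ((C+1)/C_S) * Metric.infDist (D T) ((S n : Set W)))
      Filter.atTop (nhds 0) := by
    simpa using hdense.const_mul ((C+1)/C_S)
  exact squeeze_zero (fun n => norm_nonneg _) key hlim
end
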